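/- Let Z be the 6×3 real matrix with rows (2,2,2), (2,3,2), (0,1,0), (−1,0,0), (1,2,2), (0,0,1). Then for every real 3×2 matrix M, it is not the case that all fifteen 2×2 minors of the 6×2 matrix ZM (one for each pair of rows) are strictly positive. In particular, Z does not satisfy condition (★) for k = 2, m = 1, n = 6. -/

import Mathlib

open Matrix

/-- The minor of a real `k × n` matrix on a set `S` of `k` columns. -/
noncomputable def minorCols {k n : ℕ} (A : Matrix (Fin k) (Fin n) ℝ)
    (S : Finset (Fin n)) (hS : S.card = k) : ℝ :=
  (A.submatrix id (fun i => ((S.orderIsoOfFin hS) i : Fin n))).det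

/-- The minor of a real `n × k` matrix on a set `S` of `k` rows. -/
noncomputable def minorRows {k n : ℕ} (B : Matrix (Fin n) (Fin k) ℝ)
    (S : Finset (Fin n)) (hS : S.card = k) : ℝ :=
  (B.submatrix (fun i => ((S.orderIsoOfFin hS) i : Fin n)) id).det

/-- A real `k × n` matrix is totally nonnegative if all its maximal (`k × k`) minors
are nonnegative. -/
def IsTotallyNonneg {k n : ℕ} (A : Matrix (Fin k) (Fin n) ℝ) : Prop :=
  ∀ (S : Finset (Fin n)) (hS : S.card = k), 0 ≤ minorCols A S hS

/-- A real `k × n` matrix is totally positive if all its maximal (`k × k`) minors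
are strictly positive. -/
def IsTotallyPos {k n : ℕ} (A : Matrix (Fin k) (Fin n) ℝ) : Prop :=
  ∀ (S : Finset (Fin n)) (hS : S.card = k), 0 < minorCols A S hS

/-- Galashin's matrix: the `6 × 3` matrix with rows
`(2,2,2), (2,3,2), (0,1,0), (-1,0,0), (1,2,2), (0,0,1)`. -/
noncomputable def Zwild : Matrix (Fin 6) (Fin 3) ℝ :=
  !![2, 2, 2; 2, 3, 2; 0, 1, 0; -1, 0, 0; 1, 2, 2; 0, 0, 1]

/-- For every real `3 × 2` matrix `M`, not all fifteen `2 × 2` minors of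
the `6 × 2` matrix `Zwild * M` (one for each pair of rows) are strictly positive; i.e. `Zwild`
does not satisfy condition (★) for `k = 2`, `m = 1`, `n = 6`. -/

lemma minor_fin6_eq (B : Matrix (Fin 6) (Fin 2) ℝ) (a b : Fin 6) (hab : a < b)
    (h : ({a, b} : Finset (Fin 6)).card = 2) :
    minorRows B {a, b} h = B a 0 * B b 1 - B a 1 * B b 0 := by
  have hmono : StrictMono (![a, b] : Fin 2 → Fin 6) := by
    intro i j hij
    fin_cases i <;> fin_cases j <;> simp_all
  have hmem : ∀ x : Fin 2, (![a, b] : Fin 2 → Fin 6) x ∈ ({a, b} : Finset (Fin 6)) := by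
    intro x; fin_cases x <;> simp
  have key : ⇑(({a, b} : Finset (Fin 6)).orderEmbOfFin h) = ![a, b] :=
    (Finset.orderEmbOfFin_unique h hmem hmono).symm
  have key' : ∀ i : Fin 2,
      ((({a, b} : Finset (Fin 6)).orderIsoOfFin h) i : Fin 6) = ![a, b] i := by
    intro i
    rw [show ((({a, b} : Finset (Fin 6)).orderIsoOfFin h) i : Fin 6)
        = ({a, b} : Finset (Fin 6)).orderEmbOfFin h i from rfl, key]
  rw [minorRows, Matrix.det_fin_two]
  simp [key']

theorem stmt14 :
    ∀ M : Matrix (Fin 3) (Fin 2) ℝ,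
      ¬ (∀ (S : Finset (Fin 6)) (hS : S.card = 2), 0 < minorRows (Zwild * M) S hS) := by
  intro M h
  have h1 := h {0, 3} (by decide)
  have h2 := h {3, 4} (by decide)
  rw [minor_fin6_eq _ 0 3 (by decide)] at h1
  rw [minor_fin6_eq _ 3 4 (by decide)] at h2
  simp only [Matrix.mul_apply, Fin.sum_univ_three, Zwild] at h1 h2
  norm_num [Matrix.cons_val_zero, Matrix.cons_val_one, Matrix.cons_val] at h1 h2
  simp at h1 h2
  nlinarith [h1, h2]
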